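/- Let S be a finite collection of nonempty subsets of [d], and for each j ∈ [d] let S_j = {S ∈ 𝕊 : j ∈ S} be nonempty. Let σ²_𝕊 = (σ²_{S,j})_{S∈𝕊, j∈S} be nonnegative reals satisfying |𝕊_j|⁻¹ Σ_{S ∈ 𝕊_j} σ²_{S,j} = 1 for all j ∈ [d]. Define V(σ²_𝕊) = 1 − min_j min_{S∈𝕊_j} σ²_{S,j}. Then V(σ²_𝕊) equals the infimum over ε ∈ [0,1] such that σ²_{S,j} = (1−ε)·1 + ε·σ'²_{S,j} for some nonnegative σ'²_𝕊 satisfying the same averaging constraint |𝕊_j|⁻¹ Σ_{S ∈ 𝕊_j} σ'²_{S,j} = 1 for all j. -/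

import Mathlib

/-- Dual representation of the inconsistency measure `V(σ²_𝕊)`: if the per-coordinate
average variance is normalised to `1`, then `1 − min_j min_{S ∋ j} σ²_{S,j}` equals
the least `ε ∈ [0,1]` such that `σ²_𝕊 = (1−ε)·𝟙 + ε·σ'²_𝕊` for some nonnegative `σ'²_𝕊`
satisfying the same averaging constraint. -/
theorem stmt10 {d : ℕ} (hd : 0 < d) (𝕊 : Finset (Finset (Fin d)))
    (hne : ∀ S ∈ 𝕊, S.Nonempty)
    (hSj : ∀ j : Fin d, (𝕊.filter (fun S => j ∈ S)).Nonempty)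
    (σ2 : Finset (Fin d) → Fin d → ℝ)
    (hnn : ∀ S ∈ 𝕊, ∀ j ∈ S, 0 ≤ σ2 S j)
    (havg : ∀ j : Fin d,
      (∑ S ∈ 𝕊.filter (fun S => j ∈ S), σ2 S j) /
        ((𝕊.filter (fun S => j ∈ S)).card : ℝ) = 1) :
    1 - (Finset.univ.inf' (Finset.univ_nonempty_iff.mpr ⟨⟨0, hd⟩⟩) fun j =>
          (𝕊.filter (fun S => j ∈ S)).inf' (hSj j) fun S => σ2 S j)
      = sInf {ε : ℝ | ε ∈ Set.Icc (0 : ℝ) 1 ∧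
          ∃ σ2' : Finset (Fin d) → Fin d → ℝ,
            (∀ S ∈ 𝕊, ∀ j ∈ S, 0 ≤ σ2' S j) ∧
            (∀ j : Fin d,
              (∑ S ∈ 𝕊.filter (fun S => j ∈ S), σ2' S j) /
                ((𝕊.filter (fun S => j ∈ S)).card : ℝ) = 1) ∧
            ∀ S ∈ 𝕊, ∀ j ∈ S, σ2 S j = (1 - ε) * 1 + ε * σ2' S j} := by
  set m := (Finset.univ.inf' (Finset.univ_nonempty_iff.mpr ⟨⟨0, hd⟩⟩) fun j =>
          (𝕊.filter (fun S => j ∈ S)).inf' (hSj j) fun S => σ2 S j) with hm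
  have hcard : ∀ j : Fin d, (0:ℝ) < ((𝕊.filter (fun S => j ∈ S)).card : ℝ) := by
    intro j
    exact_mod_cast Finset.card_pos.mpr (hSj j)
  have hsum : ∀ j : Fin d, ∑ S ∈ 𝕊.filter (fun S => j ∈ S), σ2 S j
      = ((𝕊.filter (fun S => j ∈ S)).card : ℝ) := by
    intro j
    have h := havg j
    have hc := (hcard j).ne'
    field_simp at h
    linarith
  have hmle : ∀ S ∈ 𝕊, ∀ j ∈ S, m ≤ σ2 S j := by
    intro S hS j hj
    calc m ≤ (𝕊.filter (fun S => j ∈ S)).inf' (hSj j) fun S => σ2 S j :=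
          Finset.inf'_le _ (Finset.mem_univ j)
      _ ≤ σ2 S j := Finset.inf'_le _ (Finset.mem_filter.mpr ⟨hS, hj⟩)
  have hm0 : 0 ≤ m := by
    apply Finset.le_inf'
    intro j _
    apply Finset.le_inf'
    intro S hS
    obtain ⟨hS1, hS2⟩ := Finset.mem_filter.mp hS
    exact hnn S hS1 j hS2
  have hm1 : m ≤ 1 := by
    set j : Fin d := ⟨0, hd⟩
    have h1 : m ≤ (𝕊.filter (fun S => j ∈ S)).inf' (hSj j) fun S => σ2 S j :=
      Finset.inf'_le _ (Finset.mem_univ j)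
    have h2 : ((𝕊.filter (fun S => j ∈ S)).card : ℝ) *
        ((𝕊.filter (fun S => j ∈ S)).inf' (hSj j) fun S => σ2 S j)
        ≤ ∑ S ∈ 𝕊.filter (fun S => j ∈ S), σ2 S j := by
      rw [Finset.card_eq_sum_ones (𝕊.filter (fun S => j ∈ S))]
      push_cast
      rw [Finset.sum_mul]
      apply Finset.sum_le_sum
      intro S hS
      simpa only [one_mul] using Finset.inf'_le (fun S => σ2 S j) hS
    rw [hsum j] at h2
    nlinarith [hcard j]
  apply le_antisymm
  · apply le_csInf
    · refine ⟨1, ⟨⟨zero_le_one, le_refl _⟩, σ2, hnn, havg, ?_⟩⟩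
      intro S hS j hj; ring
    · rintro ε ⟨⟨hε0, hε1⟩, σ2', hnn', havg', heq⟩
      have hle : 1 - ε ≤ m := by
        apply Finset.le_inf'
        intro j _
        apply Finset.le_inf'
        intro S hS
        obtain ⟨hS1, hS2⟩ := Finset.mem_filter.mp hS
        have h1 := heq S hS1 j hS2
        have h2 := hnn' S hS1 j hS2
        nlinarith
      linarith
  · apply csInf_le
    · exact ⟨0, fun ε hε => hε.1.1⟩
    · rcases eq_or_lt_of_le hm1 with heq1 | hlt
      · have hall : ∀ S ∈ 𝕊, ∀ j ∈ S, σ2 S j = 1 := by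
          intro S hS j hj
          have hz : ∑ T ∈ 𝕊.filter (fun T => j ∈ T), (σ2 T j - 1) = 0 := by
            rw [Finset.sum_sub_distrib, hsum j]
            simp
          have h := (Finset.sum_eq_zero_iff_of_nonneg (by
            intro T hT
            obtain ⟨hT1, hT2⟩ := Finset.mem_filter.mp hT
            have := hmle T hT1 j hT2
            linarith [heq1 ▸ this])).mp hz S (Finset.mem_filter.mpr ⟨hS, hj⟩)
          linarith
        refine ⟨⟨by linarith, by linarith⟩, σ2, hnn, havg, ?_⟩
        intro S hS j hj
        rw [hall S hS j hj]
        ring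
      · have hpos : 0 < 1 - m := by linarith
        refine ⟨⟨by linarith, by linarith⟩,
          fun S j => (σ2 S j - m) / (1 - m), ?_, ?_, ?_⟩
        · intro S hS j hj
          have := hmle S hS j hj
          exact div_nonneg (by linarith) hpos.le
        · intro j
          have hrw : ∑ S ∈ 𝕊.filter (fun S => j ∈ S), (σ2 S j - m) / (1 - m)
              = ((∑ S ∈ 𝕊.filter (fun S => j ∈ S), σ2 S j)
                 - ((𝕊.filter (fun S => j ∈ S)).card : ℝ) * m) / (1 - m) := by
            rw [← Finset.sum_div, Finset.sum_sub_distrib]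
            congr 1
            rw [Finset.sum_const, nsmul_eq_mul]
          rw [hrw, hsum j]
          have hc := (hcard j).ne'
          field_simp
        · intro S hS j hj
          field_simp
          ring
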